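/- Let (f,g) ∈ 𝒞₄(I) and suppose there exist a, b, c ∈ ℝ such that a(f')² + bf'g' + c(g')² = (W^{2,1}_{f,g})^{2/3} on I. Then the function (3W^{4,1}_{f,g} + 12W^{3,2}_{f,g})/(W^{2,1}_{f,g})^{5/3} − 5(W^{3,1}_{f,g})²/(W^{2,1}_{f,g})^{8/3} is constant on I, equal to −(9/4)(b² − 4ac). -/

import Mathlib

/-- The real cube root of a real number. -/
noncomputable def cbrt (x : ℝ) : ℝ :=
  if 0 ≤ x then x ^ ((1 : ℝ) / 3) else -((-x) ^ ((1 : ℝ) / 3))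

/-- The generalized Wronski-type determinant `W^{i,j}_{f,g}`. -/
noncomputable def Wdet (f g : ℝ → ℝ) (i j : ℕ) (x : ℝ) : ℝ :=
  iteratedDeriv i f x * iteratedDeriv j g x - iteratedDeriv j f x * iteratedDeriv i g x

lemma cbrt_cube (x : ℝ) : (cbrt x) ^ 3 = x := by
  unfold cbrt
  split_ifs with h
  · rw [← Real.rpow_natCast (x ^ ((1:ℝ)/3)) 3, ← Real.rpow_mul h]
    norm_num
  · have h' : (0:ℝ) ≤ -x := by linarith
    have : ((-x) ^ ((1:ℝ)/3)) ^ 3 = -x := by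
      rw [← Real.rpow_natCast ((-x) ^ ((1:ℝ)/3)) 3, ← Real.rpow_mul h']
      norm_num
    calc (-((-x) ^ ((1:ℝ)/3))) ^ 3 = -(((-x) ^ ((1:ℝ)/3)) ^ 3) := by ring
    _ = x := by rw [this]; ring

lemma cbrt_ne_zero {x : ℝ} (h : x ≠ 0) : cbrt x ≠ 0 := by
  intro h0
  apply h
  rw [← cbrt_cube x, h0]
  ring

/-- Core algebraic lemma. -/
lemma key_algebra (u W Wp s r h hp hpp Qp Bv D : ℝ) (hu : u ≠ 0)
    (e2 : u ^ 2 = h) (e3 : u ^ 3 = W)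
    (R1 : h * Qp - (hp / 2) ^ 2 + (D / 4) * W ^ 2 = 0)
    (R2 : W * Bv + s * h - Wp * hp / 2 = 0)
    (R3 : hpp = 2 * Qp + 2 * Bv)
    (E2 : 2 * W * Wp - 3 * h ^ 2 * hp = 0)
    (E3 : 2 * Wp ^ 2 + 2 * W * (r + s) - 6 * h * hp ^ 2 - 3 * h ^ 2 * hpp = 0) :
    (3 * r + 12 * s) / u ^ 5 - 5 * Wp ^ 2 / u ^ 8 = -(9 / 4) * D := by
  have hWp : 2 * Wp = 3 * u * hp := by
    apply mul_left_cancel₀ (pow_ne_zero 3 hu)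
    linear_combination E2 + 2 * Wp * e3 - 3 * hp * (u ^ 2 + h) * e2
  have hsu : s * u ^ 2 = u * hp ^ 2 - (D / 4) * u ^ 7 - u ^ 3 * hpp / 2 := by
    linear_combination (u ^ 3 / 2) * R3 + R2 + Bv * e3 + s * e2 + u * R1 + u * Qp * e2
      + (D / 4) * u * (u ^ 3 + W) * e3 + (hp / 4) * hWp
  have hrs : (r + s) * u ^ 3 = 3 / 4 * u ^ 2 * hp ^ 2 + 3 / 2 * u ^ 4 * hpp := by
    linear_combination (1 / 2) * E3 + (r + s) * e3 - (1 / 4) * (2 * Wp + 3 * u * hp) * hWp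
      - (3 * hp ^ 2 + 3 / 2 * hpp * (u ^ 2 + h)) * e2
  have key : (3 * r + 12 * s) * u ^ 3 - 5 * Wp ^ 2 + 9 / 4 * D * u ^ 8 = 0 := by
    linear_combination 3 * hrs + 9 * u * hsu - (5 / 4) * (2 * Wp + 3 * u * hp) * hWp
  have h5 : u ^ 5 ≠ 0 := pow_ne_zero _ hu
  have h8 : u ^ 8 ≠ 0 := pow_ne_zero _ hu
  have e1 : (3 * r + 12 * s) / u ^ 5 - 5 * Wp ^ 2 / u ^ 8
      = ((3 * r + 12 * s) * u ^ 3 - 5 * Wp ^ 2) / u ^ 8 := by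
    field_simp
  rw [e1, div_eq_iff h8]
  linear_combination key
/-- If a 𝒞₄ pair satisfies `a(f')² + bf'g' + c(g')² = (W^{2,1})^{2/3}`, then the
expression `(3W^{4,1} + 12W^{3,2})/(W^{2,1})^{5/3} − 5(W^{3,1})²/(W^{2,1})^{8/3}`
is constant on I, equal to `−(9/4)(b² − 4ac)`. -/
theorem expression_constant_of_quad_relation
    (I : Set ℝ) (hI : IsOpen I) (hIc : I.OrdConnected) (hne : I.Nonempty)
    (f g : ℝ → ℝ)
    (hf : ContDiffOn ℝ 4 f I) (hg : ContDiffOn ℝ 4 g I)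
    (hg' : ∀ x ∈ I, deriv g x ≠ 0)
    (hphi' : ∀ x ∈ I, deriv (fun t => deriv f t / deriv g t) x ≠ 0)
    (a b c : ℝ)
    (hquad : ∀ x ∈ I,
      a * (deriv f x) ^ 2 + b * deriv f x * deriv g x + c * (deriv g x) ^ 2 =
        (cbrt (Wdet f g 2 1 x)) ^ 2) :
    ∀ x ∈ I,
      (3 * Wdet f g 4 1 x + 12 * Wdet f g 3 2 x) / (cbrt (Wdet f g 2 1 x)) ^ 5 -
        5 * (Wdet f g 3 1 x) ^ 2 / (cbrt (Wdet f g 2 1 x)) ^ 8 =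
      -(9 / 4) * (b ^ 2 - 4 * a * c) := by
  set F1 := deriv f with hF1d
  set F2 := deriv F1 with hF2d
  set F3 := deriv F2 with hF3d
  set F4 := deriv F3 with hF4d
  set G1 := deriv g with hG1d
  set G2 := deriv G1 with hG2d
  set G3 := deriv G2 with hG3d
  set G4 := deriv G3 with hG4d
  -- iterated derivative identifications
  have e1f : iteratedDeriv 1 f = F1 := by rw [iteratedDeriv_one, hF1d]
  have e2f : iteratedDeriv 2 f = F2 := by
    rw [hF2d, hF1d, show (2:ℕ) = 1 + 1 from rfl, iteratedDeriv_succ, iteratedDeriv_one]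
  have e3f : iteratedDeriv 3 f = F3 := by
    rw [show (3:ℕ) = 2 + 1 from rfl, iteratedDeriv_succ, e2f, hF3d]
  have e4f : iteratedDeriv 4 f = F4 := by
    rw [show (4:ℕ) = 3 + 1 from rfl, iteratedDeriv_succ, e3f, hF4d]
  have e1g : iteratedDeriv 1 g = G1 := by rw [iteratedDeriv_one, hG1d]
  have e2g : iteratedDeriv 2 g = G2 := by
    rw [hG2d, hG1d, show (2:ℕ) = 1 + 1 from rfl, iteratedDeriv_succ, iteratedDeriv_one]
  have e3g : iteratedDeriv 3 g = G3 := by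
    rw [show (3:ℕ) = 2 + 1 from rfl, iteratedDeriv_succ, e2g, hG3d]
  have e4g : iteratedDeriv 4 g = G4 := by
    rw [show (4:ℕ) = 3 + 1 from rfl, iteratedDeriv_succ, e3g, hG4d]
  -- smoothness of iterated derivatives
  have hcf1 : ContDiffOn ℝ 3 F1 I := hf.deriv_of_isOpen hI (by norm_num)
  have hcf2 : ContDiffOn ℝ 2 F2 I := hcf1.deriv_of_isOpen hI (by norm_num)
  have hcf3 : ContDiffOn ℝ 1 F3 I := hcf2.deriv_of_isOpen hI (by norm_num)
  have hcg1 : ContDiffOn ℝ 3 G1 I := hg.deriv_of_isOpen hI (by norm_num)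
  have hcg2 : ContDiffOn ℝ 2 G2 I := hcg1.deriv_of_isOpen hI (by norm_num)
  have hcg3 : ContDiffOn ℝ 1 G3 I := hcg2.deriv_of_isOpen hI (by norm_num)
  have dF1 : ∀ x ∈ I, HasDerivAt F1 (F2 x) x := fun x hx =>
    ((hcf1.differentiableOn (by norm_num)).differentiableAt (hI.mem_nhds hx)).hasDerivAt
  have dF2 : ∀ x ∈ I, HasDerivAt F2 (F3 x) x := fun x hx =>
    ((hcf2.differentiableOn (by norm_num)).differentiableAt (hI.mem_nhds hx)).hasDerivAt
  have dF3 : ∀ x ∈ I, HasDerivAt F3 (F4 x) x := fun x hx =>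
    ((hcf3.differentiableOn (by norm_num)).differentiableAt (hI.mem_nhds hx)).hasDerivAt
  have dG1 : ∀ x ∈ I, HasDerivAt G1 (G2 x) x := fun x hx =>
    ((hcg1.differentiableOn (by norm_num)).differentiableAt (hI.mem_nhds hx)).hasDerivAt
  have dG2 : ∀ x ∈ I, HasDerivAt G2 (G3 x) x := fun x hx =>
    ((hcg2.differentiableOn (by norm_num)).differentiableAt (hI.mem_nhds hx)).hasDerivAt
  have dG3 : ∀ x ∈ I, HasDerivAt G3 (G4 x) x := fun x hx =>
    ((hcg3.differentiableOn (by norm_num)).differentiableAt (hI.mem_nhds hx)).hasDerivAt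
  -- Wdet identifications
  have w21 : ∀ x, Wdet f g 2 1 x = F2 x * G1 x - F1 x * G2 x := by
    intro x; rw [Wdet, e2f, e1f, e1g, e2g]
  have w31 : ∀ x, Wdet f g 3 1 x = F3 x * G1 x - F1 x * G3 x := by
    intro x; rw [Wdet, e3f, e1f, e1g, e3g]
  have w41 : ∀ x, Wdet f g 4 1 x = F4 x * G1 x - F1 x * G4 x := by
    intro x; rw [Wdet, e4f, e1f, e1g, e4g]
  have w32 : ∀ x, Wdet f g 3 2 x = F3 x * G2 x - F2 x * G3 x := by
    intro x; rw [Wdet, e3f, e2f, e2g, e3g]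
  -- nonvanishing of the Wronskian
  have hWne : ∀ x ∈ I, F2 x * G1 x - F1 x * G2 x ≠ 0 := by
    intro x hx h0
    have hdiv : HasDerivAt (fun t => F1 t / G1 t)
        ((F2 x * G1 x - F1 x * G2 x) / G1 x ^ 2) x :=
      (dF1 x hx).div (dG1 x hx) (hg' x hx)
    apply hphi' x hx
    rw [hdiv.deriv, h0, zero_div]
  -- pointwise identity W^2 = h^3
  have hq : ∀ x ∈ I, (F2 x * G1 x - F1 x * G2 x) ^ 2
      = (a * F1 x ^ 2 + b * F1 x * G1 x + c * G1 x ^ 2) ^ 3 := by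
    intro x hx
    have h1 := hquad x hx
    rw [← w21 x, h1]
    conv_lhs => rw [← cbrt_cube (Wdet f g 2 1 x)]
    ring
  -- derivative facts for the basic functions
  have dW : ∀ x ∈ I, HasDerivAt (fun t => F2 t * G1 t - F1 t * G2 t)
      (F3 x * G1 x - F1 x * G3 x) x := by
    intro x hx
    have h := ((dF2 x hx).mul (dG1 x hx)).sub ((dF1 x hx).mul (dG2 x hx))
    refine h.congr_deriv ?_
    ring
  have dH : ∀ x ∈ I, HasDerivAt (fun t => a * F1 t ^ 2 + b * F1 t * G1 t + c * G1 t ^ 2)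
      (2 * a * F1 x * F2 x + b * (F2 x * G1 x + F1 x * G2 x) + 2 * c * G1 x * G2 x) x := by
    intro x hx
    have h := (((dF1 x hx).pow 2).const_mul a).add
      ((((dF1 x hx).mul (dG1 x hx)).const_mul b).add (((dG1 x hx).pow 2).const_mul c))
    refine (h.congr_deriv ?_).congr_of_eventuallyEq (Filter.Eventually.of_forall fun t => ?_)
    · ring
    · simp only [Pi.add_apply, Pi.sub_apply, Pi.mul_apply, Pi.pow_apply]; ring
  -- first differentiated identity (E2)
  have hE2 : ∀ x ∈ I,
      2 * (F2 x * G1 x - F1 x * G2 x) * (F3 x * G1 x - F1 x * G3 x)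
        - 3 * (a * F1 x ^ 2 + b * F1 x * G1 x + c * G1 x ^ 2) ^ 2
          * (2 * a * F1 x * F2 x + b * (F2 x * G1 x + F1 x * G2 x) + 2 * c * G1 x * G2 x)
      = 0 := by
    intro x hx
    have hΦ : HasDerivAt (fun t => (F2 t * G1 t - F1 t * G2 t) ^ 2
        - (a * F1 t ^ 2 + b * F1 t * G1 t + c * G1 t ^ 2) ^ 3)
        (2 * (F2 x * G1 x - F1 x * G2 x) * (F3 x * G1 x - F1 x * G3 x)
          - 3 * (a * F1 x ^ 2 + b * F1 x * G1 x + c * G1 x ^ 2) ^ 2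
            * (2 * a * F1 x * F2 x + b * (F2 x * G1 x + F1 x * G2 x) + 2 * c * G1 x * G2 x)) x := by
      have h := ((dW x hx).pow 2).sub ((dH x hx).pow 3)
      refine h.congr_deriv ?_
      ring
    have hzero : deriv (fun t => (F2 t * G1 t - F1 t * G2 t) ^ 2
        - (a * F1 t ^ 2 + b * F1 t * G1 t + c * G1 t ^ 2) ^ 3) x = 0 := by
      have hev : (fun t => (F2 t * G1 t - F1 t * G2 t) ^ 2
          - (a * F1 t ^ 2 + b * F1 t * G1 t + c * G1 t ^ 2) ^ 3)
          =ᶠ[nhds x] fun _ => (0:ℝ) := by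
        filter_upwards [hI.mem_nhds hx] with y hy
        exact sub_eq_zero.mpr (hq y hy)
      rw [hev.deriv_eq]
      exact deriv_const x 0
    rw [← hΦ.deriv]
    exact hzero
  -- second differentiated identity (E3)
  have hE3 : ∀ x ∈ I,
      2 * (F3 x * G1 x - F1 x * G3 x) ^ 2
        + 2 * (F2 x * G1 x - F1 x * G2 x)
          * ((F4 x * G1 x - F1 x * G4 x) + (F3 x * G2 x - F2 x * G3 x))
        - 6 * (a * F1 x ^ 2 + b * F1 x * G1 x + c * G1 x ^ 2)
          * (2 * a * F1 x * F2 x + b * (F2 x * G1 x + F1 x * G2 x) + 2 * c * G1 x * G2 x) ^ 2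
        - 3 * (a * F1 x ^ 2 + b * F1 x * G1 x + c * G1 x ^ 2) ^ 2
          * (2 * a * (F2 x ^ 2 + F1 x * F3 x)
            + b * (F3 x * G1 x + 2 * F2 x * G2 x + F1 x * G3 x)
            + 2 * c * (G2 x ^ 2 + G1 x * G3 x))
      = 0 := by
    intro x hx
    have dWp : HasDerivAt (fun t => F3 t * G1 t - F1 t * G3 t)
        ((F4 x * G1 x - F1 x * G4 x) + (F3 x * G2 x - F2 x * G3 x)) x := by
      have h := ((dF3 x hx).mul (dG1 x hx)).sub ((dF1 x hx).mul (dG3 x hx))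
      refine h.congr_deriv ?_
      ring
    have dHp : HasDerivAt (fun t => 2 * a * F1 t * F2 t
        + b * (F2 t * G1 t + F1 t * G2 t) + 2 * c * G1 t * G2 t)
        (2 * a * (F2 x ^ 2 + F1 x * F3 x)
          + b * (F3 x * G1 x + 2 * F2 x * G2 x + F1 x * G3 x)
          + 2 * c * (G2 x ^ 2 + G1 x * G3 x)) x := by
      have h := ((((dF1 x hx).mul (dF2 x hx)).const_mul (2 * a)).add
        ((((dF2 x hx).mul (dG1 x hx)).add ((dF1 x hx).mul (dG2 x hx))).const_mul b)).add
        (((dG1 x hx).mul (dG2 x hx)).const_mul (2 * c))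
      refine (h.congr_deriv ?_).congr_of_eventuallyEq (Filter.Eventually.of_forall fun t => ?_)
      · ring
      · simp only [Pi.add_apply, Pi.sub_apply, Pi.mul_apply, Pi.pow_apply]; ring
    have hΦ : HasDerivAt (fun t =>
        2 * (F2 t * G1 t - F1 t * G2 t) * (F3 t * G1 t - F1 t * G3 t)
          - 3 * (a * F1 t ^ 2 + b * F1 t * G1 t + c * G1 t ^ 2) ^ 2
            * (2 * a * F1 t * F2 t + b * (F2 t * G1 t + F1 t * G2 t) + 2 * c * G1 t * G2 t))
        (2 * (F3 x * G1 x - F1 x * G3 x) ^ 2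
          + 2 * (F2 x * G1 x - F1 x * G2 x)
            * ((F4 x * G1 x - F1 x * G4 x) + (F3 x * G2 x - F2 x * G3 x))
          - 6 * (a * F1 x ^ 2 + b * F1 x * G1 x + c * G1 x ^ 2)
            * (2 * a * F1 x * F2 x + b * (F2 x * G1 x + F1 x * G2 x) + 2 * c * G1 x * G2 x) ^ 2
          - 3 * (a * F1 x ^ 2 + b * F1 x * G1 x + c * G1 x ^ 2) ^ 2
            * (2 * a * (F2 x ^ 2 + F1 x * F3 x)
              + b * (F3 x * G1 x + 2 * F2 x * G2 x + F1 x * G3 x)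
              + 2 * c * (G2 x ^ 2 + G1 x * G3 x))) x := by
      have h := (((dW x hx).mul dWp).const_mul 2).sub
        ((((dH x hx).pow 2).mul dHp).const_mul 3)
      refine (h.congr_deriv ?_).congr_of_eventuallyEq (Filter.Eventually.of_forall fun t => ?_)
      · simp only [Pi.pow_apply]; ring
      · simp only [Pi.add_apply, Pi.sub_apply, Pi.mul_apply, Pi.pow_apply]; ring
    have hzero : deriv (fun t =>
        2 * (F2 t * G1 t - F1 t * G2 t) * (F3 t * G1 t - F1 t * G3 t)
          - 3 * (a * F1 t ^ 2 + b * F1 t * G1 t + c * G1 t ^ 2) ^ 2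
            * (2 * a * F1 t * F2 t + b * (F2 t * G1 t + F1 t * G2 t) + 2 * c * G1 t * G2 t)) x
        = 0 := by
      have hev : (fun t =>
          2 * (F2 t * G1 t - F1 t * G2 t) * (F3 t * G1 t - F1 t * G3 t)
            - 3 * (a * F1 t ^ 2 + b * F1 t * G1 t + c * G1 t ^ 2) ^ 2
              * (2 * a * F1 t * F2 t + b * (F2 t * G1 t + F1 t * G2 t) + 2 * c * G1 t * G2 t))
          =ᶠ[nhds x] fun _ => (0:ℝ) := by
        filter_upwards [hI.mem_nhds hx] with y hy
        exact hE2 y hy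
      rw [hev.deriv_eq]
      exact deriv_const x 0
    rw [← hΦ.deriv]
    exact hzero
  -- conclusion at each point
  intro x hx
  rw [w41 x, w32 x, w31 x, w21 x]
  have hu : cbrt (F2 x * G1 x - F1 x * G2 x) ≠ 0 := cbrt_ne_zero (hWne x hx)
  refine key_algebra (cbrt (F2 x * G1 x - F1 x * G2 x))
    (F2 x * G1 x - F1 x * G2 x) (F3 x * G1 x - F1 x * G3 x)
    (F3 x * G2 x - F2 x * G3 x) (F4 x * G1 x - F1 x * G4 x)
    (a * F1 x ^ 2 + b * F1 x * G1 x + c * G1 x ^ 2)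
    (2 * a * F1 x * F2 x + b * (F2 x * G1 x + F1 x * G2 x) + 2 * c * G1 x * G2 x)
    (2 * a * (F2 x ^ 2 + F1 x * F3 x) + b * (F3 x * G1 x + 2 * F2 x * G2 x + F1 x * G3 x)
      + 2 * c * (G2 x ^ 2 + G1 x * G3 x))
    (a * F2 x ^ 2 + b * F2 x * G2 x + c * G2 x ^ 2)
    (a * F1 x * F3 x + b / 2 * (F1 x * G3 x + F3 x * G1 x) + c * G1 x * G3 x)
    (b ^ 2 - 4 * a * c) hu ?_ ?_ (by ring) (by ring) (by ring) ?_ ?_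
  · rw [← w21 x]
    exact (hquad x hx).symm
  · exact cbrt_cube _
  · have := hE2 x hx; linarith [this]
  · have := hE3 x hx; linarith [this]
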